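/- Fix an integer p ≥ 5 and set λ = 2cos(π/p), so that λ² - 1 > 0. Define q(z) = √(λ²-1)/(√(λ²-1)·z - 1) - 1/(z + √(λ²-1)). Then q satisfies the rational period function relations of weight 2 on the Hecke group G_p: for every z ∈ ℂ with Im z ≠ 0, q(z) + z^{-2}·q(-1/z) = 0 and Σ_{j=0}^{p-1} (q |_{2} U^j)(z) = 0. (Its poles 1/√(λ²-1) and -√(λ²-1) form a single irreducible system of poles without Hecke-symmetry.) -/

import Mathlib

/-- The weight-`2k` slash operator: for a real 2×2 matrix `M = ((a,b),(c,d))`,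
`(f ∣_{2k} M)(z) = (cz+d)^{-2k} · f((az+b)/(cz+d))`. -/
noncomputable def slash (k : ℕ) (M : Matrix (Fin 2) (Fin 2) ℝ)
    (f : ℂ → ℂ) (z : ℂ) : ℂ :=
  ((M 1 0 : ℂ) * z + (M 1 1 : ℂ)) ^ (-(2 * (k : ℤ))) *
    f (((M 0 0 : ℂ) * z + (M 0 1 : ℂ)) / ((M 1 0 : ℂ) * z + (M 1 1 : ℂ)))

/-- Nonvanishing of real-linear forms at non-real `z`. -/
lemma lin_ne (g d : ℝ) (z : ℂ) (hz : z.im ≠ 0) (h : g ≠ 0 ∨ d ≠ 0) :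
    (g : ℂ) * z + (d : ℂ) ≠ 0 := by
  intro H
  have him : ((g : ℂ) * z + (d : ℂ)).im = g * z.im := by
    simp [Complex.add_im, Complex.mul_im]
  have hre : ((g : ℂ) * z + (d : ℂ)).re = g * z.re + d := by
    simp [Complex.add_re, Complex.mul_re]
  rw [H] at him hre
  simp at him hre
  rcases him with h1 | h1
  · rcases h with h2 | h2
    · exact h2 h1
    · apply h2; rw [h1] at hre; linarith
  · exact hz h1

/-- Partial-fraction form of the slash of `q` by a determinant-one matrix. -/
lemma slash_q (s : ℝ) (hs : 0 < s) (q : ℂ → ℂ)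
    (hq : ∀ z : ℂ, q z = (s : ℂ) / ((s : ℂ) * z - 1) - 1 / (z + (s : ℂ)))
    (a b c d : ℝ) (hdet : a * d - b * c = 1) (z : ℂ) (hz : z.im ≠ 0) :
    slash 1 !![a, b; c, d] q z
      = ((s * a - c : ℝ) : ℂ) / (((s * a - c : ℝ) : ℂ) * z + ((s * b - d : ℝ) : ℂ))
        - ((a + s * c : ℝ) : ℂ) / (((a + s * c : ℝ) : ℂ) * z + ((b + s * d : ℝ) : ℂ)) := by
  have hD : (c : ℂ) * z + (d : ℂ) ≠ 0 := by
    apply lin_ne _ _ _ hz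
    by_contra hcd
    push_neg at hcd
    rw [hcd.1, hcd.2] at hdet; simp at hdet
  have hL1 : ((s * a - c : ℝ) : ℂ) * z + ((s * b - d : ℝ) : ℂ) ≠ 0 := by
    apply lin_ne _ _ _ hz
    by_contra hcd
    push_neg at hcd
    have h1 : c = s * a := by linarith [hcd.1]
    have h2 : d = s * b := by linarith [hcd.2]
    rw [h1, h2] at hdet; nlinarith
  have hL2 : ((a + s * c : ℝ) : ℂ) * z + ((b + s * d : ℝ) : ℂ) ≠ 0 := by
    apply lin_ne _ _ _ hz
    by_contra hcd
    push_neg at hcd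
    have h1 : a = -(s * c) := by linarith [hcd.1]
    have h2 : b = -(s * d) := by linarith [hcd.2]
    rw [h1, h2] at hdet; nlinarith
  have hdetC : (a : ℂ) * d - b * c = 1 := by exact_mod_cast congrArg (Complex.ofReal) hdet
  simp only [slash, Matrix.cons_val', Matrix.cons_val_zero, Matrix.cons_val_one,
    Matrix.head_cons, Matrix.empty_val', Matrix.cons_val_fin_one, Matrix.head_fin_const,
    Matrix.of_apply]
  rw [hq]
  set D : ℂ := (c : ℂ) * z + (d : ℂ) with hDdef
  set L1 : ℂ := ((s * a - c : ℝ) : ℂ) * z + ((s * b - d : ℝ) : ℂ) with hL1def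
  set L2 : ℂ := ((a + s * c : ℝ) : ℂ) * z + ((b + s * d : ℝ) : ℂ) with hL2def
  set N : ℂ := (a : ℂ) * z + (b : ℂ) with hNdef
  have e1 : (s : ℂ) * (N / D) - 1 = L1 / D := by
    rw [hNdef, hL1def, hDdef]
    push_cast
    rw [mul_div_assoc', div_sub_one (hD : (c:ℂ) * z + d ≠ 0)]
    congr 1; ring
  have e2 : N / D + (s : ℂ) = L2 / D := by
    rw [hNdef, hL2def, hDdef]
    push_cast
    rw [div_add' _ _ _ (hD : (c:ℂ) * z + d ≠ 0)]
    congr 1; ring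
  rw [e1, e2, div_div_eq_mul_div, one_div_div]
  have hexp : D ^ (-(2 * ((1 : ℕ) : ℤ))) = (D ^ 2)⁻¹ := by
    rw [show (-(2 * ((1 : ℕ) : ℤ))) = (-2 : ℤ) by norm_num, zpow_neg, zpow_two, sq]
  rw [hexp]
  rw [div_sub_div _ _ hL1 hL2, div_sub_div _ _ hL1 hL2, inv_mul_eq_div, div_div]
  rw [div_eq_div_iff (mul_ne_zero (mul_ne_zero hL1 hL2) (pow_ne_zero 2 hD)) (mul_ne_zero hL1 hL2)]
  rw [hDdef, hL1def, hL2def]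
  push_cast
  linear_combination (-(((s:ℂ))^2+1) * ((c:ℂ)*z+d)^2 * (((s:ℂ)*a-c)*z+((s:ℂ)*b-d)) * (((a:ℂ)+(s:ℂ)*c)*z+((b:ℂ)+(s:ℂ)*d))) * hdetC

/-- Scale invariance of `γ/(γz+δ)`. -/
lemma scale_frac (μ g d : ℝ) (hμ : μ ≠ 0) (z : ℂ) :
    ((μ * g : ℝ) : ℂ) / (((μ * g : ℝ) : ℂ) * z + ((μ * d : ℝ) : ℂ))
      = ((g : ℝ) : ℂ) / (((g : ℝ) : ℂ) * z + ((d : ℝ) : ℂ)) := by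
  push_cast
  rw [show (μ:ℂ) * g * z + (μ:ℂ) * d = (μ:ℂ) * ((g:ℂ) * z + (d:ℂ)) by ring]
  exact mul_div_mul_left _ _ (by exact_mod_cast hμ)

noncomputable def dd (p : ℕ) (j : ℕ) : ℝ :=
  Real.sin (j * (Real.pi / p)) / Real.sin (Real.pi / p)

lemma sin_theta_pos (p : ℕ) (hp : 5 ≤ p) : 0 < Real.sin (Real.pi / p) := by
  have hpi := Real.pi_pos
  have hp0 : (0:ℝ) < p := by positivity
  have hp5 : (5:ℝ) ≤ p := by exact_mod_cast hp
  apply Real.sin_pos_of_pos_of_lt_pi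
  · positivity
  · rw [div_lt_iff₀ hp0]
    nlinarith

lemma dd_zero (p : ℕ) : dd p 0 = 0 := by simp [dd]

lemma dd_one (p : ℕ) (hp : 5 ≤ p) : dd p 1 = 1 := by
  have := sin_theta_pos p hp
  simp [dd]
  field_simp
  exact ne_of_gt this

lemma dd_rec (p : ℕ) (hp : 5 ≤ p) (lam : ℝ) (hlam : lam = 2 * Real.cos (Real.pi / p))
    (j : ℕ) : dd p (j + 2) = lam * dd p (j + 1) - dd p j := by
  have hs := sin_theta_pos p hp
  unfold dd
  rw [hlam]
  have h1 : ((j + 2 : ℕ) : ℝ) * (Real.pi / p) = ((j + 1 : ℕ) : ℝ) * (Real.pi / p) + Real.pi / p := by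
    push_cast; ring
  have h2 : ((j : ℕ) : ℝ) * (Real.pi / p) = ((j + 1 : ℕ) : ℝ) * (Real.pi / p) - Real.pi / p := by
    push_cast; ring
  rw [h1, h2, Real.sin_add, Real.sin_sub]
  field_simp
  ring

lemma dd_two (p : ℕ) (hp : 5 ≤ p) (lam : ℝ) (hlam : lam = 2 * Real.cos (Real.pi / p)) :
    dd p 2 = lam := by
  have := dd_rec p hp lam hlam 0
  rw [dd_zero, dd_one p hp] at this
  simpa using this

lemma dd_p (p : ℕ) (hp : 5 ≤ p) : dd p p = 0 := by
  have hp0 : (p:ℝ) ≠ 0 := by positivity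
  unfold dd
  rw [show (p:ℝ) * (Real.pi / p) = Real.pi by field_simp, Real.sin_pi, zero_div]

lemma dd_p1 (p : ℕ) (hp : 5 ≤ p) : dd p (p+1) = -1 := by
  have hp0 : (p:ℝ) ≠ 0 := by positivity
  have hs := sin_theta_pos p hp
  unfold dd
  rw [show ((p+1:ℕ):ℝ) * (Real.pi / p) = Real.pi + Real.pi / p by push_cast; field_simp]
  rw [Real.sin_add, Real.sin_pi, Real.cos_pi]
  field_simp
  ring

lemma dd_p2 (p : ℕ) (hp : 5 ≤ p) (lam : ℝ) (hlam : lam = 2 * Real.cos (Real.pi / p)) :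
    dd p (p+2) = -lam := by
  have hp0 : (p:ℝ) ≠ 0 := by positivity
  have hs := sin_theta_pos p hp
  unfold dd
  rw [show ((p+2:ℕ):ℝ) * (Real.pi / p) = Real.pi + 2 * (Real.pi / p) by
    push_cast; field_simp]
  rw [Real.sin_add, Real.sin_pi, Real.cos_pi, Real.sin_two_mul, hlam]
  field_simp
  ring

lemma Upow (p : ℕ) (hp : 5 ≤ p) (lam : ℝ) (hlam : lam = 2 * Real.cos (Real.pi / p))
    (U : Matrix (Fin 2) (Fin 2) ℝ) (hU : U = !![lam, -1; 1, 0]) (j : ℕ) :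
    U ^ j = !![dd p (j + 1), -dd p j; dd p j, dd p (j + 1) - lam * dd p j] := by
  induction j with
  | zero =>
    rw [pow_zero, dd_zero, dd_one p hp]
    norm_num
    exact Matrix.one_fin_two
  | succ n ih =>
    have r1 := dd_rec p hp lam hlam n
    rw [pow_succ, ih, hU, Matrix.mul_fin_two, show n + 1 + 1 = n + 2 from rfl]
    ext i j
    fin_cases i <;> fin_cases j <;>
      simp [Matrix.cons_val_zero, Matrix.cons_val_one, Matrix.head_cons] <;>
      linarith [r1]

/-- Fix an integer `p ≥ 5` and set `λ = 2cos(π/p)`, so that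
`λ² - 1 > 0`.  Define
`q(z) = √(λ²-1)/(√(λ²-1)·z - 1) - 1/(z + √(λ²-1))`.
Then `q` satisfies the rational period function relations of weight `2` on the
Hecke group `G_p`: for every `z ∈ ℂ` with `Im z ≠ 0`,
`q(z) + z^{-2}·q(-1/z) = 0` and `Σ_{j=0}^{p-1} (q ∣_2 U^j)(z) = 0`. -/
theorem stmt12 (p : ℕ) (hp : 5 ≤ p)
    (lam : ℝ) (hlam : lam = 2 * Real.cos (Real.pi / p))
    (hlam1 : lam ^ 2 - 1 > 0)
    (U : Matrix (Fin 2) (Fin 2) ℝ) (hU : U = !![lam, -1; 1, 0])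
    (q : ℂ → ℂ)
    (hq : ∀ z : ℂ, q z =
      (Real.sqrt (lam ^ 2 - 1) : ℂ) / ((Real.sqrt (lam ^ 2 - 1) : ℂ) * z - 1) -
      1 / (z + (Real.sqrt (lam ^ 2 - 1) : ℂ))) :
    ∀ z : ℂ, z.im ≠ 0 →
      q z + z ^ (-2 : ℤ) * q (-1 / z) = 0 ∧
      ∑ j ∈ Finset.range p, slash 1 (U ^ j) q z = 0 := by
  intro z hz
  set s : ℝ := Real.sqrt (lam ^ 2 - 1) with hsdef
  have hs2 : s ^ 2 = lam ^ 2 - 1 := Real.sq_sqrt (le_of_lt hlam1)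
  have hspos : 0 < s := Real.sqrt_pos.mpr hlam1
  have hlampos : 0 < lam := by
    rw [hlam]
    have hpi := Real.pi_pos
    have hp5 : (5:ℝ) ≤ p := by exact_mod_cast hp
    have h1 : 0 < Real.pi / p := by positivity
    have h2 : Real.pi / p < Real.pi / 2 := by
      apply div_lt_div_of_pos_left hpi (by norm_num)
      linarith
    have := Real.cos_pos_of_mem_Ioo (Set.mem_Ioo.mpr ⟨by linarith, h2⟩)
    linarith
  have hsl : s + lam ≠ 0 := by positivity
  -- nonvanishing facts
  have hz0 : z ≠ 0 := by
    intro h; apply hz; rw [h]; simp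
  have h1 : (s : ℂ) * z - 1 ≠ 0 := by
    have := lin_ne s (-1) z hz (Or.inl (ne_of_gt hspos))
    push_cast at this
    simpa [sub_eq_add_neg] using this
  have h2 : z + (s : ℂ) ≠ 0 := by
    have := lin_ne 1 s z hz (Or.inl one_ne_zero)
    push_cast at this
    simpa using this
  constructor
  · -- T relation
    rw [hq z, hq (-1/z)]
    have e3 : (s : ℂ) * (-1/z) - 1 = -((z + s) / z) := by
      field_simp
      ring
    have e4 : (-1/z) + (s : ℂ) = ((s:ℂ) * z - 1) / z := by
      field_simp; ring
    rw [e3, e4, div_neg, div_div_eq_mul_div, one_div_div]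
    rw [show z ^ (-2 : ℤ) = (z ^ 2)⁻¹ by rw [zpow_neg, zpow_two, sq]]
    field_simp
    ring
  · -- U relation
    set F : ℕ → ℂ := fun j =>
      ((dd p (j+1) + s * dd p j : ℝ) : ℂ) /
        (((dd p (j+1) + s * dd p j : ℝ) : ℂ) * z +
          ((-dd p j + s * (dd p (j+1) - lam * dd p j) : ℝ) : ℂ)) with hF
    have hdet : ∀ j : ℕ, dd p (j+1) * (dd p (j+1) - lam * dd p j) - (-dd p j) * dd p j = 1 := by
      intro j
      have h := congrArg Matrix.det (Upow p hp lam hlam U hU j)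
      rw [Matrix.det_pow, hU] at h
      rw [Matrix.det_fin_two_of] at h
      rw [Matrix.det_fin_two_of] at h
      norm_num at h
      linarith [h]
    have hterm : ∀ j : ℕ, slash 1 (U ^ j) q z = F (j + 2) - F j := by
      intro j
      rw [Upow p hp lam hlam U hU j]
      rw [slash_q s hspos q hq _ _ _ _ (hdet j) z hz]
      have r1 := dd_rec p hp lam hlam j
      have r2 : dd p (j + 2 + 1) = lam * dd p (j + 2) - dd p (j + 1) := by
        rw [show j + 2 + 1 = (j + 1) + 2 by omega]
        exact dd_rec p hp lam hlam (j + 1)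
      have g1 : dd p (j + 2 + 1) + s * dd p (j + 2)
          = (s + lam) * (s * dd p (j + 1) - dd p j) := by
        rw [r2, r1]; linear_combination (-(dd p (j+1))) * hs2
      have g2 : -dd p (j + 2) + s * (dd p (j + 2 + 1) - lam * dd p (j + 2))
          = (s + lam) * (s * -dd p j - (dd p (j + 1) - lam * dd p j)) := by
        rw [r2, r1]; linear_combination dd p j * hs2
      have hρ : F (j + 2)
          = ((s * dd p (j+1) - dd p j : ℝ) : ℂ) /
              (((s * dd p (j+1) - dd p j : ℝ) : ℂ) * z +
                ((s * -dd p j - (dd p (j+1) - lam * dd p j) : ℝ) : ℂ)) := by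
        rw [hF]
        simp only []
        rw [g1, g2]
        exact scale_frac (s + lam) _ _ hsl z
      rw [hρ, hF]
    have htel : ∑ j ∈ Finset.range p, slash 1 (U ^ j) q z
        = (F (p + 1) - F 1) + (F p - F 0) := by
      rw [Finset.sum_congr rfl (fun j _ => hterm j)]
      have : ∀ j : ℕ, F (j + 2) - F j = (F (j + 2) - F (j + 1)) + (F (j + 1) - F j) := by
        intro j; ring
      rw [Finset.sum_congr rfl (fun j _ => this j), Finset.sum_add_distrib]
      rw [show (∑ j ∈ Finset.range p, (F (j + 2) - F (j + 1)))
          = ∑ j ∈ Finset.range p, ((fun k => F (k + 1)) (j + 1) - (fun k => F (k + 1)) j) from rfl]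
      rw [Finset.sum_range_sub (fun k => F (k + 1)), Finset.sum_range_sub F]
    rw [htel]
    have hFp : F p = F 0 := by
      rw [hF]
      simp only []
      rw [dd_p p hp, dd_p1 p hp, dd_zero, dd_one p hp]
      rw [show (-1 + s * 0 : ℝ) = (-1) * (1 + s * 0) by ring,
          show (-0 + s * (-1 - lam * 0) : ℝ) = (-1) * (-0 + s * (1 - lam * 0)) by ring]
      exact scale_frac (-1) _ _ (by norm_num) z
    have hFp1 : F (p + 1) = F 1 := by
      rw [hF]
      simp only []
      rw [show p + 1 + 1 = p + 2 by omega, dd_p1 p hp, dd_p2 p hp lam hlam,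
        dd_one p hp, dd_two p hp lam hlam]
      rw [show (-lam + s * -1 : ℝ) = (-1) * (lam + s * 1) by ring,
          show (-(-1) + s * (-lam - lam * -1) : ℝ) = (-1) * (-1 + s * (lam - lam * 1)) by ring]
      exact scale_frac (-1) _ _ (by norm_num) z
    rw [hFp, hFp1]
    ring
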